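/- Every formula provable in CL5⁻ is an atomic-level instance of a normal binary tautology. -/

import Mathlib

namespace CirquentCalc

/-- Formulas: literals (negation applied only to atoms), ∧, ∨. -/
inductive Fml where
  | pos : ℕ → Fml
  | neg : ℕ → Fml
  | and : Fml → Fml → Fml
  | or : Fml → Fml → Fml
deriving DecidableEq

namespace Fml

/-- Negation (pushed to atoms, as ¬ applies only to atoms). -/
def negate : Fml → Fml
  | pos n => neg n
  | neg n => pos n
  | and a b => or a.negate b.negate
  | or a b => and a.negate b.negate

/-- Substitution extended homomorphically. -/
def subst (σ : ℕ → Fml) : Fml → Fml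
  | pos n => σ n
  | neg n => (σ n).negate
  | and a b => and (a.subst σ) (b.subst σ)
  | or a b => or (a.subst σ) (b.subst σ)

/-- Classical evaluation under a truth assignment. -/
def eval (v : ℕ → Bool) : Fml → Bool
  | pos n => v n
  | neg n => !(v n)
  | and a b => a.eval v && b.eval v
  | or a b => a.eval v || b.eval v

/-- Number of positive occurrences of atom `a`. -/
def cPos (a : ℕ) : Fml → ℕ
  | pos n => if n = a then 1 else 0
  | neg _ => 0
  | and f g => f.cPos a + g.cPos a
  | or f g => f.cPos a + g.cPos a

/-- Number of negative occurrences of atom `a`. -/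
def cNeg (a : ℕ) : Fml → ℕ
  | pos _ => 0
  | neg n => if n = a then 1 else 0
  | and f g => f.cNeg a + g.cNeg a
  | or f g => f.cNeg a + g.cNeg a

/-- Total number of positive occurrences of atoms. -/
def posOcc : Fml → ℕ
  | pos _ => 1
  | neg _ => 0
  | and f g => f.posOcc + g.posOcc
  | or f g => f.posOcc + g.posOcc

/-- Length: total number of occurrences of literals and connectives. -/
def len : Fml → ℕ
  | pos _ => 1
  | neg _ => 1
  | and f g => f.len + g.len + 1
  | or f g => f.len + g.len + 1

/-- Number of occurrences of ∧. -/
def nAnd : Fml → ℕ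
  | pos _ => 0
  | neg _ => 0
  | and f g => f.nAnd + g.nAnd + 1
  | or f g => f.nAnd + g.nAnd

/-- Number of occurrences of ∨. -/
def nOr : Fml → ℕ
  | pos _ => 0
  | neg _ => 0
  | and f g => f.nOr + g.nOr
  | or f g => f.nOr + g.nOr + 1

end Fml

def Tautology (A : Fml) : Prop := ∀ v, A.eval v = true

/-- No atom has more than two occurrences. -/
def Binary (A : Fml) : Prop := ∀ a, A.cPos a + A.cNeg a ≤ 2

/-- Whenever an atom occurs twice, one occurrence is positive and one negative. -/
def Normal (A : Fml) : Prop := ∀ a, A.cPos a ≤ 1 ∧ A.cNeg a ≤ 1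

def AtomicLevel (σ : ℕ → Fml) : Prop := ∀ n, ∃ m, σ n = Fml.pos m

/-- `F` is an instance of `B`: σ(B) = F for some substitution σ. -/
def InstanceOf (F B : Fml) : Prop := ∃ σ, B.subst σ = F

/-- `F` is an atomic-level instance of `B`. -/
def AtomicInstanceOf (F B : Fml) : Prop := ∃ σ, AtomicLevel σ ∧ B.subst σ = F

/-- A cirquent: a pool of (occurrences of) formulas, and a list of ogroups,
each an (index-)set of oformulas of the pool. -/
structure Cirquent where
  pool : List Fml
  groups : List (Finset ℕ)

def emptyCirquent : Cirquent := ⟨[], []⟩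

def idCirquent (F : Fml) : Cirquent := ⟨[F.negate, F], [{0, 1}]⟩

/-- The cirquent with pool ⟨F⟩ and one ogroup containing F. -/
def fmlCirquent (F : Fml) : Cirquent := ⟨[F], [{0}]⟩

/-- Index renaming swapping `i` and `i+1`. -/
def swapIdx (i : ℕ) : ℕ → ℕ := fun j => if j = i then i + 1 else if j = i + 1 then i else j

/-- Index renaming when a new oformula is inserted at position `i`. -/
def insShift (i : ℕ) : ℕ → ℕ := fun j => if j < i then j else j + 1

/-- Index renaming when the oformulas at positions `i`, `i+1` are merged into one at `i`. -/
def mergeIdx (i : ℕ) : ℕ → ℕ := fun j => if j ≤ i then j else j - 1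

/-- Mix: placing the two premise cirquents side by side. -/
def MixStep (A B C : Cirquent) : Prop :=
  C.pool = A.pool ++ B.pool ∧
  C.groups = A.groups ++ B.groups.map (Finset.image (· + A.pool.length))

/-- Oformula exchange: swap two adjacent oformulas, preserving containment. -/
def OfExchStep (P C : Cirquent) : Prop :=
  ∃ (l₁ l₂ : List Fml) (F G : Fml),
    P.pool = l₁ ++ F :: G :: l₂ ∧ C.pool = l₁ ++ G :: F :: l₂ ∧
    C.groups = P.groups.map (Finset.image (swapIdx l₁.length))

/-- Ogroup exchange: swap two adjacent ogroups. -/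
def OgExchStep (P C : Cirquent) : Prop :=
  C.pool = P.pool ∧
  ∃ (g₁ g₂ : List (Finset ℕ)) (Γ Δ : Finset ℕ),
    P.groups = g₁ ++ Γ :: Δ :: g₂ ∧ C.groups = g₁ ++ Δ :: Γ :: g₂

/-- Pool weakening: insert a new oformula, contained in no ogroup. -/
def PoolWeakStep (P C : Cirquent) : Prop :=
  ∃ (l₁ l₂ : List Fml) (F : Fml),
    P.pool = l₁ ++ l₂ ∧ C.pool = l₁ ++ F :: l₂ ∧
    C.groups = P.groups.map (Finset.image (insShift l₁.length))

/-- Ogroup weakening: add a new arc between a pre-existing ogroup and oformula. -/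
def OgWeakStep (P C : Cirquent) : Prop :=
  C.pool = P.pool ∧
  ∃ (g₁ g₂ : List (Finset ℕ)) (Γ : Finset ℕ) (j : ℕ),
    j < P.pool.length ∧ j ∉ Γ ∧
    P.groups = g₁ ++ Γ :: g₂ ∧ C.groups = g₁ ++ insert j Γ :: g₂

/-- Downward duplication: replace an ogroup by two adjacent copies of it. -/
def DupDownStep (P C : Cirquent) : Prop :=
  C.pool = P.pool ∧
  ∃ (g₁ g₂ : List (Finset ℕ)) (Γ : Finset ℕ),
    P.groups = g₁ ++ Γ :: g₂ ∧ C.groups = g₁ ++ Γ :: Γ :: g₂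

/-- Upward duplication: the converse of downward duplication. -/
def DupUpStep (P C : Cirquent) : Prop :=
  C.pool = P.pool ∧
  ∃ (g₁ g₂ : List (Finset ℕ)) (Γ : Finset ℕ),
    P.groups = g₁ ++ Γ :: Γ :: g₂ ∧ C.groups = g₁ ++ Γ :: g₂

/-- ∨-introduction: merge two adjacent oformulas F, G into F ∨ G. -/
def OrIntroStep (P C : Cirquent) : Prop :=
  ∃ (l₁ l₂ : List Fml) (F G : Fml),
    P.pool = l₁ ++ F :: G :: l₂ ∧ C.pool = l₁ ++ (Fml.or F G) :: l₂ ∧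
    C.groups = P.groups.map (Finset.image (mergeIdx l₁.length))

/-- The merging of the ogroup list in ∧-introduction: no ogroup contains both `i`
and `i+1`; every ogroup containing `i` is immediately followed by one containing
`i+1` and vice versa; such pairs are merged. -/
inductive AndMerge (i : ℕ) : List (Finset ℕ) → List (Finset ℕ) → Prop where
  | nil : AndMerge i [] []
  | skip {Γ : Finset ℕ} {l l' : List (Finset ℕ)} :
      i ∉ Γ → (i + 1) ∉ Γ → AndMerge i l l' → AndMerge i (Γ :: l) (Γ :: l')
  | merge {Γ Δ : Finset ℕ} {l l' : List (Finset ℕ)} :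
      i ∈ Γ → (i + 1) ∉ Γ → (i + 1) ∈ Δ → i ∉ Δ →
      AndMerge i l l' → AndMerge i (Γ :: Δ :: l) ((Γ ∪ Δ) :: l')

/-- ∧-introduction. -/
def AndIntroStep (P C : Cirquent) : Prop :=
  ∃ (l₁ l₂ : List Fml) (F G : Fml) (merged : List (Finset ℕ)),
    P.pool = l₁ ++ F :: G :: l₂ ∧ C.pool = l₁ ++ (Fml.and F G) :: l₂ ∧
    AndMerge l₁.length P.groups merged ∧
    C.groups = merged.map (Finset.image (mergeIdx l₁.length))

inductive RuleName where
  | emptyAx | idAx | mix | ofExch | ogExch | poolWeak | ogWeak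
  | dupDown | dupUp | orIntro | andIntro
deriving DecidableEq

/-- The unary (one-premise) rules, by name. -/
def unRel : RuleName → Cirquent → Cirquent → Prop
  | .ofExch => OfExchStep
  | .ogExch => OgExchStep
  | .poolWeak => PoolWeakStep
  | .ogWeak => OgWeakStep
  | .dupDown => DupDownStep
  | .dupUp => DupUpStep
  | .orIntro => OrIntroStep
  | .andIntro => AndIntroStep
  | _ => fun _ _ => False

/-- Proof trees: each node is labeled by its cirquent and the rule used. -/
inductive PTree where
  | leaf (C : Cirquent) (r : RuleName)
  | un (C : Cirquent) (r : RuleName) (p : PTree)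
  | bin (C : Cirquent) (r : RuleName) (p q : PTree)

namespace PTree

def concl : PTree → Cirquent
  | leaf C _ => C
  | un C _ _ => C
  | bin C _ _ _ => C

/-- Validity: each node follows from its children by the named rule. -/
def Valid : PTree → Prop
  | leaf C r =>
      (r = .emptyAx ∧ C = emptyCirquent) ∨ (r = .idAx ∧ ∃ F, C = idCirquent F)
  | un C r p => p.Valid ∧ unRel r p.concl C
  | bin C r p q => p.Valid ∧ q.Valid ∧ r = .mix ∧ MixStep p.concl q.concl C

/-- Number of applications of rule `r` in the proof. -/
def count (r : RuleName) : PTree → ℕ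
  | leaf _ r' => if r' = r then 1 else 0
  | un _ r' p => (if r' = r then 1 else 0) + p.count r
  | bin _ r' p q => (if r' = r then 1 else 0) + p.count r + q.count r

/-- The cirquents occurring in the proof. -/
def cirquents : PTree → List Cirquent
  | leaf C _ => [C]
  | un C _ p => C :: p.cirquents
  | bin C _ p q => C :: (p.cirquents ++ q.cirquents)

/-- Total number of rule applications (nodes). -/
def nodes : PTree → ℕ
  | leaf _ _ => 1
  | un _ _ p => p.nodes + 1
  | bin _ _ p q => p.nodes + q.nodes + 1

/-- Number of leaves of the proof tree. -/
def leavesCount : PTree → ℕ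
  | leaf _ _ => 1
  | un _ _ p => p.leavesCount
  | bin _ _ p q => p.leavesCount + q.leavesCount

end PTree

/-- A proof uses no duplication. -/
def DupFree (p : PTree) : Prop :=
  p.count RuleName.dupDown = 0 ∧ p.count RuleName.dupUp = 0

/-- Provability of a cirquent in CL5. -/
def ProvesC (C : Cirquent) : Prop := ∃ p : PTree, p.Valid ∧ p.concl = C

/-- Provability of a formula in CL5. -/
def ProvesCL5 (F : Fml) : Prop := ∃ p : PTree, p.Valid ∧ p.concl = fmlCirquent F

/-- Provability of a formula in CL5⁻ (CL5 without duplication). -/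
def ProvesCL5m (F : Fml) : Prop :=
  ∃ p : PTree, p.Valid ∧ DupFree p ∧ p.concl = fmlCirquent F

/-- Number of arcs of a cirquent (sum of the sizes of its ogroups). -/
def Cirquent.arcs (C : Cirquent) : ℕ := (C.groups.map Finset.card).sum

/-- Size of a cirquent: sum of the lengths of the oformulas in its pool plus
the sum of the sizes of its ogroups. -/
def Cirquent.size (C : Cirquent) : ℕ := (C.pool.map Fml.len).sum + C.arcs

/-- Size of a proof: the sum of the sizes of the cirquents it contains. -/
def PTree.size (p : PTree) : ℕ := (p.cirquents.map Cirquent.size).sum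

/-- Total number of positive occurrences of atoms in the pool. -/
def Cirquent.poolPosOcc (C : Cirquent) : ℕ := (C.pool.map Fml.posOcc).sum

end CirquentCalc

open CirquentCalc
namespace CirquentCalc
namespace Fml

/-- Atom renaming. -/
def ren (τ : ℕ → ℕ) : Fml → Fml
  | pos n => pos (τ n)
  | neg n => neg (τ n)
  | and f g => and (f.ren τ) (g.ren τ)
  | or f g => or (f.ren τ) (g.ren τ)

lemma ren_negate (τ : ℕ → ℕ) (F : Fml) : (F.negate).ren τ = (F.ren τ).negate := by
  induction F <;> simp [negate, ren, *]

lemma subst_pos (τ : ℕ → ℕ) (F : Fml) : F.subst (fun n => pos (τ n)) = F.ren τ := by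
  induction F <;> simp [subst, ren, negate, *]

lemma ren_ren (τ ρ : ℕ → ℕ) (F : Fml) : (F.ren ρ).ren τ = F.ren (fun n => τ (ρ n)) := by
  induction F <;> simp [ren, *]

lemma eval_negate (v : ℕ → Bool) (F : Fml) : F.negate.eval v = !F.eval v := by
  induction F <;> simp [negate, eval, *]

lemma eval_ren (v : ℕ → Bool) (τ : ℕ → ℕ) (F : Fml) :
    (F.ren τ).eval v = F.eval (fun n => v (τ n)) := by
  induction F <;> simp [ren, eval, *]

/-- All atoms of `F` lie in `[lo, hi)`. -/
def Btw (lo hi : ℕ) : Fml → Prop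
  | pos n => lo ≤ n ∧ n < hi
  | neg n => lo ≤ n ∧ n < hi
  | and f g => Btw lo hi f ∧ Btw lo hi g
  | or f g => Btw lo hi f ∧ Btw lo hi g

lemma Btw.mono {lo hi lo' hi' : ℕ} {F : Fml} (h : Btw lo hi F)
    (h1 : lo' ≤ lo) (h2 : hi ≤ hi') : Btw lo' hi' F := by
  induction F <;> simp [Btw] at h ⊢ <;> [omega; omega; tauto; tauto]

lemma Btw.negate {lo hi : ℕ} {F : Fml} (h : Btw lo hi F) : Btw lo hi F.negate := by
  induction F <;> simp [Btw, Fml.negate] at h ⊢ <;> tauto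

lemma Btw.cPos_eq_zero {lo hi : ℕ} {F : Fml} (h : Btw lo hi F) {a : ℕ}
    (ha : a < lo ∨ hi ≤ a) : F.cPos a = 0 := by
  induction F <;> simp [Btw, cPos] at h ⊢ <;> [omega; tauto; tauto]

lemma Btw.cNeg_eq_zero {lo hi : ℕ} {F : Fml} (h : Btw lo hi F) {a : ℕ}
    (ha : a < lo ∨ hi ≤ a) : F.cNeg a = 0 := by
  induction F <;> simp [Btw, cNeg] at h ⊢ <;> [omega; tauto; tauto]

lemma ren_congr {lo hi : ℕ} {F : Fml} (h : Btw lo hi F) {τ τ' : ℕ → ℕ}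
    (hagree : ∀ a, lo ≤ a → a < hi → τ a = τ' a) : F.ren τ = F.ren τ' := by
  induction F <;> simp [Btw] at h <;> simp [ren] <;>
    first
    | exact hagree _ h.1 h.2
    | exact ⟨by tauto, by tauto⟩

lemma Btw.ren_add {lo hi : ℕ} {F : Fml} (h : Btw lo hi F) (c : ℕ) :
    Btw (lo + c) (hi + c) (F.ren (· + c)) := by
  induction F <;> simp [Btw, ren] at h ⊢ <;> [omega; omega; tauto; tauto]

lemma cPos_ren_add (c a : ℕ) (F : Fml) : (F.ren (· + c)).cPos (a + c) = F.cPos a := by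
  induction F <;> simp [ren, cPos, *]

lemma cNeg_ren_add (c a : ℕ) (F : Fml) : (F.ren (· + c)).cNeg (a + c) = F.cNeg a := by
  induction F <;> simp [ren, cNeg, *]

/-- Number of literal occurrences. -/
def width : Fml → ℕ
  | pos _ => 1
  | neg _ => 1
  | and f g => f.width + g.width
  | or f g => f.width + g.width

lemma width_pos (F : Fml) : 0 < F.width := by
  induction F <;> simp [width] <;> omega

/-- Rename atoms to distinct fresh atoms starting at `b`. -/
def fr : Fml → ℕ → Fml
  | pos _, b => pos b
  | neg _, b => neg b
  | and f g, b => and (fr f b) (fr g (b + f.width))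
  | or f g, b => or (fr f b) (fr g (b + f.width))

lemma Btw_fr (F : Fml) (b : ℕ) : Btw b (b + F.width) (fr F b) := by
  induction F generalizing b with
  | pos n => simp [fr, Btw, width]
  | neg n => simp [fr, Btw, width]
  | and f g ihf ihg =>
    refine ⟨(ihf b).mono le_rfl ?_, (ihg (b + f.width)).mono ?_ ?_⟩ <;> simp [width] <;> omega
  | or f g ihf ihg =>
    refine ⟨(ihf b).mono le_rfl ?_, (ihg (b + f.width)).mono ?_ ?_⟩ <;> simp [width] <;> omega

lemma count_fr (F : Fml) (b a : ℕ) : (fr F b).cPos a + (fr F b).cNeg a ≤ 1 := by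
  induction F generalizing b with
  | pos n => simp [fr, cPos, cNeg]; split <;> simp
  | neg n => simp [fr, cPos, cNeg]; split <;> simp
  | and f g ihf ihg =>
    simp only [fr, cPos, cNeg]
    rcases Nat.lt_or_ge a (b + f.width) with h | h
    · have h2 : (fr g (b + f.width)).cPos a = 0 := (Btw_fr g _).cPos_eq_zero (Or.inl h)
      have h3 : (fr g (b + f.width)).cNeg a = 0 := (Btw_fr g _).cNeg_eq_zero (Or.inl h)
      have := ihf b; omega
    · have h2 : (fr f b).cPos a = 0 := (Btw_fr f b).cPos_eq_zero (Or.inr h)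
      have h3 : (fr f b).cNeg a = 0 := (Btw_fr f b).cNeg_eq_zero (Or.inr h)
      have := ihg (b + f.width); omega
  | or f g ihf ihg =>
    simp only [fr, cPos, cNeg]
    rcases Nat.lt_or_ge a (b + f.width) with h | h
    · have h2 : (fr g (b + f.width)).cPos a = 0 := (Btw_fr g _).cPos_eq_zero (Or.inl h)
      have h3 : (fr g (b + f.width)).cNeg a = 0 := (Btw_fr g _).cNeg_eq_zero (Or.inl h)
      have := ihf b; omega
    · have h2 : (fr f b).cPos a = 0 := (Btw_fr f b).cPos_eq_zero (Or.inr h)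
      have h3 : (fr f b).cNeg a = 0 := (Btw_fr f b).cNeg_eq_zero (Or.inr h)
      have := ihg (b + f.width); omega

/-- The renaming recovering `F` from `fr F b`. -/
def frTau : Fml → ℕ → ℕ → ℕ
  | pos n, _, _ => n
  | neg n, _, _ => n
  | and f g, b, a => if a < b + f.width then frTau f b a else frTau g (b + f.width) a
  | or f g, b, a => if a < b + f.width then frTau f b a else frTau g (b + f.width) a

lemma ren_frTau (F : Fml) (b : ℕ) : (fr F b).ren (frTau F b) = F := by
  induction F generalizing b with
  | pos n => simp [fr, frTau, ren]
  | neg n => simp [fr, frTau, ren]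
  | and f g ihf ihg =>
    simp only [fr, ren, and.injEq]
    constructor
    · rw [ren_congr (Btw_fr f b) (τ' := frTau f b), ihf]
      intro a _ h2; simp [frTau, h2]
    · rw [ren_congr (Btw_fr g (b + f.width)) (τ' := frTau g (b + f.width)), ihg]
      intro a h1 _; simp [frTau, Nat.not_lt.mpr h1]
  | or f g ihf ihg =>
    simp only [fr, ren, or.injEq]
    constructor
    · rw [ren_congr (Btw_fr f b) (τ' := frTau f b), ihf]
      intro a _ h2; simp [frTau, h2]
    · rw [ren_congr (Btw_fr g (b + f.width)) (τ' := frTau g (b + f.width)), ihg]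
      intro a h1 _; simp [frTau, Nat.not_lt.mpr h1]

end Fml
end CirquentCalc
namespace CirquentCalc

lemma getmid {α} (l₁ l₂ : List α) (F : α) : (l₁ ++ F :: l₂)[l₁.length]? = some F := by
  rw [List.getElem?_append_right le_rfl]; simp

lemma getmid2 {α} (l₁ l₂ : List α) (F : α) (k : ℕ) :
    (l₁ ++ F :: l₂)[l₁.length + 1 + k]? = l₂[k]? := by
  rw [List.getElem?_append_right (by omega)]
  have : l₁.length + 1 + k - l₁.length = k + 1 := by omega
  rw [this]; simp

/-- An ogroup is true: some oformula in it is true. -/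
def GTrue (v : ℕ → Bool) (P : List Fml) (g : Finset ℕ) : Prop :=
  ∃ i ∈ g, ∃ A, P[i]? = some A ∧ A.eval v = true

/-- A cirquent is true: every ogroup is true. -/
def CTrue (v : ℕ → Bool) (C : Cirquent) : Prop := ∀ g ∈ C.groups, GTrue v C.pool g

lemma CTrue.of_subset {v : ℕ → Bool} {P C : Cirquent} (hp : C.pool = P.pool)
    (hg : ∀ g ∈ C.groups, g ∈ P.groups) (h : CTrue v P) : CTrue v C := by
  intro g hgm; rw [hp]; exact h g (hg g hgm)

lemma merge_transfer {l₁ l₂ : List Fml} (H : Fml) {i : ℕ} (hi : i ≠ l₁.length)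
    (hi2 : i ≠ l₁.length + 1) {F G A : Fml} (hA : (l₁ ++ F :: G :: l₂)[i]? = some A) :
    (l₁ ++ H :: l₂)[mergeIdx l₁.length i]? = some A := by
  rcases Nat.lt_or_ge i l₁.length with h | h
  · rw [mergeIdx, if_pos (le_of_lt h), List.getElem?_append_left h]
    rwa [List.getElem?_append_left h] at hA
  · have h2 : l₁.length + 2 ≤ i := by omega
    obtain ⟨k, rfl⟩ : ∃ k, i = l₁.length + 1 + (k + 1) := ⟨i - l₁.length - 2, by omega⟩
    have : (l₁ ++ F :: G :: l₂)[l₁.length + 1 + (k+1)]? = l₂[k]? := by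
      rw [getmid2]; simp
    rw [this] at hA
    have hm : mergeIdx l₁.length (l₁.length + 1 + (k+1)) = l₁.length + 1 + k := by
      rw [mergeIdx]; simp only [if_neg (by omega : ¬ l₁.length + 1 + (k+1) ≤ l₁.length)]
      omega
    rw [hm, getmid2]; exact hA

lemma val_at_n {l₁ l₂ : List Fml} {F G A : Fml}
    (hA : (l₁ ++ F :: G :: l₂)[l₁.length]? = some A) : A = F := by
  rw [getmid] at hA; exact (Option.some_inj.1 hA).symm

lemma val_at_n1 {l₁ l₂ : List Fml} {F G A : Fml}
    (hA : (l₁ ++ F :: G :: l₂)[l₁.length + 1]? = some A) : A = G := by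
  have := getmid2 l₁ (G :: l₂) F 0
  simp only [Nat.add_zero] at this
  rw [this] at hA; simp at hA; exact hA.symm

lemma CTrue.mix {v : ℕ → Bool} {A B C : Cirquent} (h : MixStep A B C)
    (ha : CTrue v A) (hb : CTrue v B) : CTrue v C := by
  obtain ⟨hp, hg⟩ := h
  intro g hgmem
  rw [hg] at hgmem
  rcases List.mem_append.1 hgmem with h1 | h1
  · obtain ⟨i, hi, A', hA', he⟩ := ha g h1
    have hlt : i < A.pool.length := (List.getElem?_eq_some_iff.1 hA').1
    exact ⟨i, hi, A', by rw [hp, List.getElem?_append_left hlt]; exact hA', he⟩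
  · obtain ⟨g₀, hg₀, rfl⟩ := List.mem_map.1 h1
    obtain ⟨i, hi, A', hA', he⟩ := hb g₀ hg₀
    refine ⟨i + A.pool.length, Finset.mem_image_of_mem _ hi, A', ?_, he⟩
    rw [hp, List.getElem?_append_right (by omega)]
    simpa using hA'

lemma CTrue.ofExch {v : ℕ → Bool} {P C : Cirquent} (h : OfExchStep P C)
    (hp : CTrue v P) : CTrue v C := by
  obtain ⟨l₁, l₂, F, G, h1, h2, h3⟩ := h
  intro g hg
  rw [h3] at hg
  obtain ⟨g₀, hg₀, rfl⟩ := List.mem_map.1 hg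
  obtain ⟨i, hi, A, hA, he⟩ := hp g₀ hg₀
  rw [h1] at hA
  refine ⟨swapIdx l₁.length i, Finset.mem_image_of_mem _ hi, A, ?_, he⟩
  rw [h2]
  rcases Nat.lt_trichotomy i l₁.length with hlt | heq | hgt
  · rw [swapIdx, if_neg (by omega), if_neg (by omega), List.getElem?_append_left hlt]
    rwa [List.getElem?_append_left hlt] at hA
  · subst heq
    rw [swapIdx, if_pos rfl]
    have := getmid2 l₁ (F :: l₂) G 0
    simp only [Nat.add_zero] at this
    rw [this]
    simp [val_at_n hA]
  · rcases Nat.eq_or_lt_of_le hgt with heq | hgt2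
    · have hi1 : i = l₁.length + 1 := by omega
      subst hi1
      rw [swapIdx, if_neg (by omega), if_pos rfl, getmid]
      rw [val_at_n1 hA]
    · obtain ⟨k, rfl⟩ : ∃ k, i = l₁.length + 1 + (k + 1) := ⟨i - l₁.length - 2, by omega⟩
      rw [swapIdx, if_neg (by omega), if_neg (by omega)]
      have e1 : (l₁ ++ G :: F :: l₂)[l₁.length + 1 + (k+1)]? = l₂[k]? := by
        rw [getmid2]; simp
      have e2 : (l₁ ++ F :: G :: l₂)[l₁.length + 1 + (k+1)]? = l₂[k]? := by
        rw [getmid2]; simp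
      rw [e1, ← e2]; exact hA

lemma CTrue.poolWeak {v : ℕ → Bool} {P C : Cirquent} (h : PoolWeakStep P C)
    (hp : CTrue v P) : CTrue v C := by
  obtain ⟨l₁, l₂, F, h1, h2, h3⟩ := h
  intro g hg
  rw [h3] at hg
  obtain ⟨g₀, hg₀, rfl⟩ := List.mem_map.1 hg
  obtain ⟨i, hi, A, hA, he⟩ := hp g₀ hg₀
  rw [h1] at hA
  refine ⟨insShift l₁.length i, Finset.mem_image_of_mem _ hi, A, ?_, he⟩
  rw [h2]
  rcases Nat.lt_or_ge i l₁.length with hlt | hge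
  · rw [insShift, if_pos hlt, List.getElem?_append_left hlt]
    rwa [List.getElem?_append_left hlt] at hA
  · obtain ⟨k, rfl⟩ : ∃ k, i = l₁.length + k := ⟨i - l₁.length, by omega⟩
    rw [insShift, if_neg (by omega)]
    have e1 : l₁.length + k + 1 = l₁.length + 1 + k := by omega
    rw [e1, getmid2]
    rw [List.getElem?_append_right (by omega)] at hA
    simpa using hA

lemma CTrue.ogWeak {v : ℕ → Bool} {P C : Cirquent} (h : OgWeakStep P C)
    (hp : CTrue v P) : CTrue v C := by
  obtain ⟨hpool, g₁, g₂, Γ, j, hj, hjΓ, h1, h2⟩ := h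
  intro g hg
  rw [h2] at hg
  rw [hpool]
  rcases List.mem_append.1 hg with h3 | h3
  · exact hp g (h1 ▸ List.mem_append.2 (Or.inl h3))
  · rcases List.mem_cons.1 h3 with rfl | h4
    · obtain ⟨i, hi, A, hA, he⟩ := hp Γ (h1 ▸ List.mem_append.2 (Or.inr List.mem_cons_self))
      exact ⟨i, Finset.mem_insert_of_mem hi, A, hA, he⟩
    · exact hp g (h1 ▸ List.mem_append.2 (Or.inr (List.mem_cons_of_mem _ h4)))

lemma CTrue.orIntro {v : ℕ → Bool} {P C : Cirquent} (h : OrIntroStep P C)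
    (hp : CTrue v P) : CTrue v C := by
  obtain ⟨l₁, l₂, F, G, h1, h2, h3⟩ := h
  intro g hg
  rw [h3] at hg
  obtain ⟨g₀, hg₀, rfl⟩ := List.mem_map.1 hg
  obtain ⟨i, hi, A, hA, he⟩ := hp g₀ hg₀
  rw [h1] at hA
  rw [h2]
  by_cases hn : i = l₁.length
  · refine ⟨mergeIdx l₁.length i, Finset.mem_image_of_mem _ hi, Fml.or F G, ?_, ?_⟩
    · rw [hn, mergeIdx, if_pos le_rfl, getmid]
    · subst hn
      have := val_at_n hA
      subst this
      simp [Fml.eval, he]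
  · by_cases hn1 : i = l₁.length + 1
    · refine ⟨mergeIdx l₁.length i, Finset.mem_image_of_mem _ hi, Fml.or F G, ?_, ?_⟩
      · rw [hn1, mergeIdx, if_neg (by omega)]
        simpa using getmid l₁ l₂ (Fml.or F G)
      · subst hn1
        have := val_at_n1 hA
        subst this
        simp [Fml.eval, he]
    · exact ⟨mergeIdx l₁.length i, Finset.mem_image_of_mem _ hi, A,
        merge_transfer _ hn hn1 hA, he⟩

lemma andMerge_true {v : ℕ → Bool} {l₁ l₂ : List Fml} {F G : Fml}
    {gs ms : List (Finset ℕ)} (hm : AndMerge l₁.length gs ms)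
    (hgs : ∀ g ∈ gs, GTrue v (l₁ ++ F :: G :: l₂) g) :
    ∀ g ∈ ms, GTrue v (l₁ ++ (Fml.and F G) :: l₂) (g.image (mergeIdx l₁.length)) := by
  revert hgs
  induction hm with
  | nil => intro _ g hg; cases hg
  | @skip Γ l l' hn hn1 hrec ih =>
    intro hgs g hg
    rcases List.mem_cons.1 hg with rfl | hg2
    · obtain ⟨i, hi, A, hA, he⟩ := hgs g List.mem_cons_self
      have hin : i ≠ l₁.length := fun h => hn (h ▸ hi)
      have hin1 : i ≠ l₁.length + 1 := fun h => hn1 (h ▸ hi)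
      exact ⟨mergeIdx l₁.length i, Finset.mem_image_of_mem _ hi, A,
        merge_transfer _ hin hin1 hA, he⟩
    · exact ih (fun g' hg' => hgs g' (List.mem_cons_of_mem _ hg')) g hg2
  | @merge Γ Δ l l' hiΓ hn1Γ hn1Δ hiΔ hrec ih =>
    intro hgs g hg
    rcases List.mem_cons.1 hg with rfl | hg2
    · obtain ⟨i, hi, A, hA, he⟩ := hgs Γ List.mem_cons_self
      obtain ⟨j, hj, B, hB, heB⟩ := hgs Δ (List.mem_cons_of_mem _ List.mem_cons_self)
      have hin1 : i ≠ l₁.length + 1 := fun h => hn1Γ (h ▸ hi)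
      have hjn : j ≠ l₁.length := fun h => hiΔ (h ▸ hj)
      by_cases hin : i = l₁.length
      · by_cases hjn1 : j = l₁.length + 1
        · -- both central: F and G true
          refine ⟨l₁.length, ?_, Fml.and F G, getmid _ _ _, ?_⟩
          · refine Finset.mem_image.2 ⟨i, Finset.mem_union_left _ hi, ?_⟩
            rw [hin, mergeIdx, if_pos le_rfl]
          · have hAF := val_at_n (hin ▸ hA)
            have hBG := val_at_n1 (hjn1 ▸ hB)
            simp [Fml.eval, hAF ▸ he, hBG ▸ heB]
        · refine ⟨mergeIdx l₁.length j, Finset.mem_image_of_mem _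
              (Finset.mem_union_right _ hj), B, merge_transfer _ hjn hjn1 hB, heB⟩
      · exact ⟨mergeIdx l₁.length i, Finset.mem_image_of_mem _
            (Finset.mem_union_left _ hi), A, merge_transfer _ hin hin1 hA, he⟩
    · exact ih (fun g' hg' => hgs g'
        (List.mem_cons_of_mem _ (List.mem_cons_of_mem _ hg'))) g hg2

lemma CTrue.andIntro {v : ℕ → Bool} {P C : Cirquent} (h : AndIntroStep P C)
    (hp : CTrue v P) : CTrue v C := by
  obtain ⟨l₁, l₂, F, G, merged, h1, h2, hmerge, h3⟩ := h
  intro g hg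
  rw [h3] at hg
  obtain ⟨g₀, hg₀, rfl⟩ := List.mem_map.1 hg
  rw [h2]
  exact andMerge_true hmerge (fun g' hg' => h1 ▸ hp g' hg') g₀ hg₀

/-- Soundness of CL5. -/
theorem sound : ∀ p : PTree, p.Valid → ∀ v, CTrue v p.concl := by
  intro p
  induction p with
  | leaf C r =>
    rintro (⟨_, rfl⟩ | ⟨_, F, rfl⟩) v
    · intro g hg; cases hg
    · intro g hg
      simp only [idCirquent] at hg ⊢
      rcases List.mem_singleton.1 hg with rfl
      rcases hb : F.eval v with _ | _
      · exact ⟨0, by simp, F.negate, rfl, by simp [Fml.eval_negate, hb]⟩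
      · exact ⟨1, by simp, F, rfl, hb⟩
  | un C r p ih =>
    rintro ⟨hv, hstep⟩ v
    have hP := ih hv v
    cases r with
    | ofExch => exact CTrue.ofExch hstep hP
    | ogExch =>
      obtain ⟨hpool, g₁, g₂, Γ, Δ, h1, h2⟩ := hstep
      refine CTrue.of_subset hpool (fun g hg => ?_) hP
      simp only [PTree.concl] at hg
      rw [h2] at hg; rw [h1]
      simp only [List.mem_append, List.mem_cons] at hg ⊢; tauto
    | poolWeak => exact CTrue.poolWeak hstep hP
    | ogWeak => exact CTrue.ogWeak hstep hP
    | dupDown =>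
      obtain ⟨hpool, g₁, g₂, Γ, h1, h2⟩ := hstep
      refine CTrue.of_subset hpool (fun g hg => ?_) hP
      simp only [PTree.concl] at hg
      rw [h2] at hg; rw [h1]
      simp only [List.mem_append, List.mem_cons] at hg ⊢; tauto
    | dupUp =>
      obtain ⟨hpool, g₁, g₂, Γ, h1, h2⟩ := hstep
      refine CTrue.of_subset hpool (fun g hg => ?_) hP
      simp only [PTree.concl] at hg
      rw [h2] at hg; rw [h1]
      simp only [List.mem_append, List.mem_cons] at hg ⊢; tauto
    | orIntro => exact CTrue.orIntro hstep hP
    | andIntro => exact CTrue.andIntro hstep hP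
    | emptyAx => exact hstep.elim
    | idAx => exact hstep.elim
    | mix => exact hstep.elim
  | bin C r p q ihp ihq =>
    rintro ⟨hvp, hvq, rfl, hmix⟩ v
    exact CTrue.mix hmix (ihp hvp v) (ihq hvq v)

end CirquentCalc
namespace CirquentCalc

def mapC (τ : ℕ → ℕ) (C : Cirquent) : Cirquent := ⟨C.pool.map (Fml.ren τ), C.groups⟩

@[simp] lemma mapC_pool (τ : ℕ → ℕ) (C : Cirquent) :
    (mapC τ C).pool = C.pool.map (Fml.ren τ) := rfl

@[simp] lemma mapC_groups (τ : ℕ → ℕ) (C : Cirquent) : (mapC τ C).groups = C.groups := rfl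

lemma unRel_mapC (τ : ℕ → ℕ) (r : RuleName) {P C : Cirquent} (h : unRel r P C) :
    unRel r (mapC τ P) (mapC τ C) := by
  cases r with
  | ofExch =>
    obtain ⟨l₁, l₂, F, G, h1, h2, h3⟩ := h
    exact ⟨l₁.map (Fml.ren τ), l₂.map (Fml.ren τ), F.ren τ, G.ren τ,
      by simp [h1], by simp [h2], by simp [h3]⟩
  | ogExch =>
    obtain ⟨hpool, g₁, g₂, Γ, Δ, h1, h2⟩ := h
    exact ⟨by simp [hpool], g₁, g₂, Γ, Δ, by simp [h1], by simp [h2]⟩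
  | poolWeak =>
    obtain ⟨l₁, l₂, F, h1, h2, h3⟩ := h
    exact ⟨l₁.map (Fml.ren τ), l₂.map (Fml.ren τ), F.ren τ,
      by simp [h1], by simp [h2], by simp [h3]⟩
  | ogWeak =>
    obtain ⟨hpool, g₁, g₂, Γ, j, hj, hjΓ, h1, h2⟩ := h
    exact ⟨by simp [hpool], g₁, g₂, Γ, j, by simpa using hj, hjΓ, by simp [h1], by simp [h2]⟩
  | dupDown =>
    obtain ⟨hpool, g₁, g₂, Γ, h1, h2⟩ := h
    exact ⟨by simp [hpool], g₁, g₂, Γ, by simp [h1], by simp [h2]⟩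
  | dupUp =>
    obtain ⟨hpool, g₁, g₂, Γ, h1, h2⟩ := h
    exact ⟨by simp [hpool], g₁, g₂, Γ, by simp [h1], by simp [h2]⟩
  | orIntro =>
    obtain ⟨l₁, l₂, F, G, h1, h2, h3⟩ := h
    exact ⟨l₁.map (Fml.ren τ), l₂.map (Fml.ren τ), F.ren τ, G.ren τ,
      by simp [h1], by simp [h2, Fml.ren], by simp [h3]⟩
  | andIntro =>
    obtain ⟨l₁, l₂, F, G, merged, h1, h2, hm, h3⟩ := h
    exact ⟨l₁.map (Fml.ren τ), l₂.map (Fml.ren τ), F.ren τ, G.ren τ, merged,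
      by simp [h1], by simp [h2, Fml.ren], by simpa using hm, by simp [h3]⟩
  | emptyAx => exact h.elim
  | idAx => exact h.elim
  | mix => exact h.elim

def PTree.mapP (τ : ℕ → ℕ) : PTree → PTree
  | .leaf C r => .leaf (mapC τ C) r
  | .un C r p => .un (mapC τ C) r (p.mapP τ)
  | .bin C r p q => .bin (mapC τ C) r (p.mapP τ) (q.mapP τ)

@[simp] lemma PTree.mapP_concl (τ : ℕ → ℕ) (p : PTree) :
    (p.mapP τ).concl = mapC τ p.concl := by
  cases p <;> rfl

lemma PTree.mapP_valid (τ : ℕ → ℕ) {p : PTree} (h : p.Valid) : (p.mapP τ).Valid := by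
  induction p with
  | leaf C r =>
    rcases h with ⟨hr, rfl⟩ | ⟨hr, F, rfl⟩
    · exact Or.inl ⟨hr, by simp [mapC, emptyCirquent]⟩
    · refine Or.inr ⟨hr, F.ren τ, ?_⟩
      simp [mapC, idCirquent, Fml.ren_negate]
  | un C r p ih =>
    obtain ⟨hv, hstep⟩ := h
    exact ⟨ih hv, by rw [PTree.mapP_concl]; exact unRel_mapC τ r hstep⟩
  | bin C r p q ihp ihq =>
    obtain ⟨hvp, hvq, rfl, hmix⟩ := h
    refine ⟨ihp hvp, ihq hvq, rfl, ?_⟩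
    rw [PTree.mapP_concl, PTree.mapP_concl]
    obtain ⟨h1, h2⟩ := hmix
    exact ⟨by simp [h1], by simp [h2]⟩

end CirquentCalc
namespace CirquentCalc

namespace Fml
lemma cPos_negate (a : ℕ) (F : Fml) : F.negate.cPos a = F.cNeg a := by
  induction F <;> simp [negate, cPos, cNeg, *]
lemma cNeg_negate (a : ℕ) (F : Fml) : F.negate.cNeg a = F.cPos a := by
  induction F <;> simp [negate, cPos, cNeg, *]
end Fml

lemma map_split0 {α β : Type} (f : α → β) : ∀ {L : List α} {l₁ l₂ : List β},
    L.map f = l₁ ++ l₂ → ∃ m₁ m₂, L = m₁ ++ m₂ ∧ m₁.map f = l₁ ∧ m₂.map f = l₂ := by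
  intro L l₁
  induction l₁ generalizing L with
  | nil => exact fun h => ⟨[], L, by simp, rfl, by simpa using h⟩
  | cons x l₁ ih =>
    intro l₂ h
    cases L with
    | nil => simp at h
    | cons a L' =>
      simp only [List.map_cons, List.cons_append, List.cons.injEq] at h
      obtain ⟨m₁, m₂, rfl, hm₁, hm₂⟩ := ih h.2
      exact ⟨a :: m₁, m₂, rfl, by simp [h.1, hm₁], hm₂⟩

lemma map_split1 {α β : Type} (f : α → β) {L : List α} {l₁ l₂ : List β} {x : β}
    (h : L.map f = l₁ ++ x :: l₂) :
    ∃ m₁ a m₂, L = m₁ ++ a :: m₂ ∧ m₁.map f = l₁ ∧ f a = x ∧ m₂.map f = l₂ := by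
  obtain ⟨m₁, m₂, rfl, hm₁, hm₂⟩ := map_split0 f h
  cases m₂ with
  | nil => simp at hm₂
  | cons a m₂ =>
    simp only [List.map_cons, List.cons.injEq] at hm₂
    exact ⟨m₁, a, m₂, rfl, hm₁, hm₂.1, hm₂.2⟩

lemma map_split2 {α β : Type} (f : α → β) {L : List α} {l₁ l₂ : List β} {x y : β}
    (h : L.map f = l₁ ++ x :: y :: l₂) :
    ∃ m₁ a b m₂, L = m₁ ++ a :: b :: m₂ ∧ m₁.map f = l₁ ∧ f a = x ∧ f b = y ∧
      m₂.map f = l₂ := by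
  obtain ⟨m₁, a, m₂, rfl, hm₁, ha, hm₂⟩ := map_split1 f h
  cases m₂ with
  | nil => simp at hm₂
  | cons b m₂ =>
    simp only [List.map_cons, List.cons.injEq] at hm₂
    exact ⟨m₁, a, b, m₂, rfl, hm₁, ha, hm₂.1, hm₂.2⟩

lemma sum_zero_of_btw {P : List Fml} {N a : ℕ} (h : ∀ F ∈ P, Fml.Btw 0 N F) (ha : N ≤ a) :
    (P.map (Fml.cPos a)).sum = 0 ∧ (P.map (Fml.cNeg a)).sum = 0 := by
  constructor <;>
  · apply List.sum_eq_zero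
    intro x hx
    obtain ⟨G, hG, rfl⟩ := List.mem_map.1 hx
    first
    | exact (h G hG).cPos_eq_zero (Or.inr ha)
    | exact (h G hG).cNeg_eq_zero (Or.inr ha)

/-- The key generalization lemma: any provable cirquent is the renaming-image of a
provable cirquent (with the same structure) whose pool has every atom occurring at
most once positively and at most once negatively. -/
theorem gen (p : PTree) (hvp : p.Valid) :
    ∃ (q : PTree) (N : ℕ) (τ : ℕ → ℕ), q.Valid ∧
      q.concl.groups = p.concl.groups ∧
      q.concl.pool.map (Fml.ren τ) = p.concl.pool ∧
      (∀ F ∈ q.concl.pool, Fml.Btw 0 N F) ∧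
      (∀ a, (q.concl.pool.map (Fml.cPos a)).sum ≤ 1 ∧
            (q.concl.pool.map (Fml.cNeg a)).sum ≤ 1) := by
  induction p with
  | leaf C r =>
    rcases hvp with ⟨hr, rfl⟩ | ⟨hr, F, rfl⟩
    · refine ⟨.leaf emptyCirquent .emptyAx, 0, id, Or.inl ⟨rfl, rfl⟩, rfl, rfl, ?_, ?_⟩ <;>
        simp [PTree.concl, emptyCirquent]
    · refine ⟨.leaf (idCirquent (Fml.fr F 0)) .idAx, F.width, Fml.frTau F 0,
        Or.inr ⟨rfl, _, rfl⟩, rfl, ?_, ?_, ?_⟩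
      · show ([(Fml.fr F 0).negate, Fml.fr F 0].map (Fml.ren (Fml.frTau F 0)))
            = [F.negate, F]
        simp only [List.map_cons, List.map_nil, Fml.ren_negate, Fml.ren_frTau]
      · intro G hG
        have hbase : Fml.Btw 0 (0 + F.width) (Fml.fr F 0) := Fml.Btw_fr F 0
        rcases List.mem_cons.1 hG with rfl | hG2
        · exact (hbase.negate).mono le_rfl (by omega)
        · rcases List.mem_singleton.1 hG2 with rfl
          exact hbase.mono le_rfl (by omega)
      · intro a
        have := Fml.count_fr F 0 a
        simp only [PTree.concl, idCirquent, List.map_cons, List.map_nil, List.sum_cons,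
          List.sum_nil, Fml.cPos_negate, Fml.cNeg_negate]
        omega
  | un C r p ih =>
    obtain ⟨hv, hstep⟩ := hvp
    obtain ⟨q', N', τ', hqv, hg, hmap, hbtw, hcnt⟩ := ih hv
    cases r with
    | ofExch =>
      obtain ⟨l₁, l₂, F, G, h1, h2, h3⟩ := hstep
      obtain ⟨m₁, F', G', m₂, hLeq, hm1, hF', hG', hm2⟩ := map_split2 _ (hmap.trans h1)
      have hlen : m₁.length = l₁.length := by rw [← hm1, List.length_map]
      refine ⟨.un ⟨m₁ ++ G' :: F' :: m₂,
          q'.concl.groups.map (Finset.image (swapIdx m₁.length))⟩ .ofExch q', N', τ',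
        ⟨hqv, m₁, m₂, F', G', hLeq, rfl, rfl⟩, ?_, ?_, ?_, ?_⟩
      · show List.map (Finset.image (swapIdx m₁.length)) q'.concl.groups = C.groups
        rw [h3, ← hg, hlen]
      · show (m₁ ++ G' :: F' :: m₂).map (Fml.ren τ') = C.pool
        simp [h2, hm1, hm2, hF', hG']
      · intro A hA
        apply hbtw
        rw [hLeq]
        simp only [PTree.concl, List.mem_append, List.mem_cons] at hA ⊢
        tauto
      · intro a
        have := hcnt a
        rw [hLeq] at this
        simp only [PTree.concl, List.map_append, List.map_cons, List.sum_append,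
          List.sum_cons] at this ⊢
        omega
    | ogExch =>
      obtain ⟨hpool, g₁, g₂, Γ, Δ, h1, h2⟩ := hstep
      refine ⟨.un ⟨q'.concl.pool, g₁ ++ Δ :: Γ :: g₂⟩ .ogExch q', N', τ',
        ⟨hqv, rfl, g₁, g₂, Γ, Δ, hg.trans h1, rfl⟩, h2.symm, ?_, hbtw, hcnt⟩
      show q'.concl.pool.map (Fml.ren τ') = C.pool
      rw [hmap, hpool]
    | poolWeak =>
      obtain ⟨l₁, l₂, F, h1, h2, h3⟩ := hstep
      obtain ⟨m₁, m₂, hLeq, hm1, hm2⟩ := map_split0 _ (hmap.trans h1)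
      have hlen : m₁.length = l₁.length := by rw [← hm1, List.length_map]
      refine ⟨.un ⟨m₁ ++ Fml.fr F N' :: m₂,
          q'.concl.groups.map (Finset.image (insShift m₁.length))⟩ .poolWeak q',
        N' + F.width, (fun n => if n < N' then τ' n else Fml.frTau F N' n),
        ⟨hqv, m₁, m₂, Fml.fr F N', hLeq, rfl, rfl⟩, ?_, ?_, ?_, ?_⟩
      · show List.map (Finset.image (insShift m₁.length)) q'.concl.groups = C.groups
        rw [h3, ← hg, hlen]
      · show (m₁ ++ Fml.fr F N' :: m₂).map _ = C.pool
        have hren : ∀ A ∈ q'.concl.pool,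
            A.ren (fun n => if n < N' then τ' n else Fml.frTau F N' n) = A.ren τ' := by
          intro A hA
          exact Fml.ren_congr (hbtw A hA) (fun a _ h2 => if_pos h2)
        have hfr : (Fml.fr F N').ren (fun n => if n < N' then τ' n else Fml.frTau F N' n)
            = F := by
          rw [Fml.ren_congr (Fml.Btw_fr F N') (τ' := Fml.frTau F N')
            (fun a h1 _ => if_neg (by omega)), Fml.ren_frTau]
        rw [h2, List.map_append, List.map_cons, hfr]
        have e1 : m₁.map (Fml.ren (fun n => if n < N' then τ' n else Fml.frTau F N' n))
            = l₁ := by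
          rw [← hm1]
          exact List.map_congr_left (fun A hA => hren A (by rw [hLeq]; simp [hA]))
        have e2 : m₂.map (Fml.ren (fun n => if n < N' then τ' n else Fml.frTau F N' n))
            = l₂ := by
          rw [← hm2]
          exact List.map_congr_left (fun A hA => hren A (by rw [hLeq]; simp [hA]))
        rw [e1, e2]
      · intro A hA
        simp only [PTree.concl, List.mem_append, List.mem_cons] at hA
        rcases hA with hA | rfl | hA
        · exact (hbtw A (by rw [hLeq]; simp [hA])).mono le_rfl (by omega)
        · exact (Fml.Btw_fr F N').mono (by omega) le_rfl
        · exact (hbtw A (by rw [hLeq]; simp [hA])).mono le_rfl (by omega)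
      · intro a
        have hold := hcnt a
        rw [hLeq] at hold
        simp only [PTree.concl, List.map_append, List.map_cons, List.sum_append,
          List.sum_cons] at hold ⊢
        rcases Nat.lt_or_ge a N' with hlt | hge
        · have h0p : (Fml.fr F N').cPos a = 0 := (Fml.Btw_fr F N').cPos_eq_zero (Or.inl hlt)
          have h0n : (Fml.fr F N').cNeg a = 0 := (Fml.Btw_fr F N').cNeg_eq_zero (Or.inl hlt)
          omega
        · have hb : ∀ A ∈ q'.concl.pool, Fml.Btw 0 N' A := hbtw
          rw [hLeq] at hb
          have z1 := sum_zero_of_btw (fun A hA => hb A (by simp [hA])) hge (P := m₁)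
          have z2 := sum_zero_of_btw (fun A hA => hb A (by simp [hA])) hge (P := m₂)
          have := Fml.count_fr F N' a
          omega
    | ogWeak =>
      obtain ⟨hpool, g₁, g₂, Γ, j, hj, hjΓ, h1, h2⟩ := hstep
      have hplen : q'.concl.pool.length = p.concl.pool.length := by
        rw [← hmap, List.length_map]
      refine ⟨.un ⟨q'.concl.pool, g₁ ++ insert j Γ :: g₂⟩ .ogWeak q', N', τ',
        ⟨hqv, rfl, g₁, g₂, Γ, j, by omega, hjΓ, hg.trans h1, rfl⟩, h2.symm, ?_, hbtw, hcnt⟩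
      show q'.concl.pool.map (Fml.ren τ') = C.pool
      rw [hmap, hpool]
    | dupDown =>
      obtain ⟨hpool, g₁, g₂, Γ, h1, h2⟩ := hstep
      refine ⟨.un ⟨q'.concl.pool, g₁ ++ Γ :: Γ :: g₂⟩ .dupDown q', N', τ',
        ⟨hqv, rfl, g₁, g₂, Γ, hg.trans h1, rfl⟩, h2.symm, ?_, hbtw, hcnt⟩
      show q'.concl.pool.map (Fml.ren τ') = C.pool
      rw [hmap, hpool]
    | dupUp =>
      obtain ⟨hpool, g₁, g₂, Γ, h1, h2⟩ := hstep
      refine ⟨.un ⟨q'.concl.pool, g₁ ++ Γ :: g₂⟩ .dupUp q', N', τ',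
        ⟨hqv, rfl, g₁, g₂, Γ, hg.trans h1, rfl⟩, h2.symm, ?_, hbtw, hcnt⟩
      show q'.concl.pool.map (Fml.ren τ') = C.pool
      rw [hmap, hpool]
    | orIntro =>
      obtain ⟨l₁, l₂, F, G, h1, h2, h3⟩ := hstep
      obtain ⟨m₁, F', G', m₂, hLeq, hm1, hF', hG', hm2⟩ := map_split2 _ (hmap.trans h1)
      have hlen : m₁.length = l₁.length := by rw [← hm1, List.length_map]
      refine ⟨.un ⟨m₁ ++ (Fml.or F' G') :: m₂,
          q'.concl.groups.map (Finset.image (mergeIdx m₁.length))⟩ .orIntro q', N', τ',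
        ⟨hqv, m₁, m₂, F', G', hLeq, rfl, rfl⟩, ?_, ?_, ?_, ?_⟩
      · show List.map (Finset.image (mergeIdx m₁.length)) q'.concl.groups = C.groups
        rw [h3, ← hg, hlen]
      · show (m₁ ++ (Fml.or F' G') :: m₂).map (Fml.ren τ') = C.pool
        simp [h2, hm1, hm2, hF', hG', Fml.ren]
      · intro A hA
        simp only [PTree.concl, List.mem_append, List.mem_cons] at hA
        rcases hA with hA | rfl | hA
        · exact hbtw A (by rw [hLeq]; simp [hA])
        · exact ⟨hbtw F' (by rw [hLeq]; simp), hbtw G' (by rw [hLeq]; simp)⟩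
        · exact hbtw A (by rw [hLeq]; simp [hA])
      · intro a
        have := hcnt a
        rw [hLeq] at this
        simp only [PTree.concl, List.map_append, List.map_cons, List.sum_append,
          List.sum_cons, Fml.cPos, Fml.cNeg] at this ⊢
        omega
    | andIntro =>
      obtain ⟨l₁, l₂, F, G, merged, h1, h2, hm, h3⟩ := hstep
      obtain ⟨m₁, F', G', m₂, hLeq, hm1, hF', hG', hm2⟩ := map_split2 _ (hmap.trans h1)
      have hlen : m₁.length = l₁.length := by rw [← hm1, List.length_map]
      have hm' : AndMerge m₁.length q'.concl.groups merged := by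
        rw [hlen, hg]; exact hm
      refine ⟨.un ⟨m₁ ++ (Fml.and F' G') :: m₂,
          merged.map (Finset.image (mergeIdx m₁.length))⟩ .andIntro q', N', τ',
        ⟨hqv, m₁, m₂, F', G', merged, hLeq, rfl, hm', rfl⟩, ?_, ?_, ?_, ?_⟩
      · show List.map (Finset.image (mergeIdx m₁.length)) merged = C.groups
        rw [h3, hlen]
      · show (m₁ ++ (Fml.and F' G') :: m₂).map (Fml.ren τ') = C.pool
        simp [h2, hm1, hm2, hF', hG', Fml.ren]
      · intro A hA
        simp only [PTree.concl, List.mem_append, List.mem_cons] at hA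
        rcases hA with hA | rfl | hA
        · exact hbtw A (by rw [hLeq]; simp [hA])
        · exact ⟨hbtw F' (by rw [hLeq]; simp), hbtw G' (by rw [hLeq]; simp)⟩
        · exact hbtw A (by rw [hLeq]; simp [hA])
      · intro a
        have := hcnt a
        rw [hLeq] at this
        simp only [PTree.concl, List.map_append, List.map_cons, List.sum_append,
          List.sum_cons, Fml.cPos, Fml.cNeg] at this ⊢
        omega
    | emptyAx => exact hstep.elim
    | idAx => exact hstep.elim
    | mix => exact hstep.elim
  | bin C r p₁ p₂ ih₁ ih₂ =>
    obtain ⟨hv₁, hv₂, rfl, hmix⟩ := hvp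
    obtain ⟨q₁, N₁, τ₁, hqv₁, hg₁, hmap₁, hbtw₁, hcnt₁⟩ := ih₁ hv₁
    obtain ⟨q₂, N₂, τ₂, hqv₂, hg₂, hmap₂, hbtw₂, hcnt₂⟩ := ih₂ hv₂
    obtain ⟨hP, hG⟩ := hmix
    have hplen : q₁.concl.pool.length = p₁.concl.pool.length := by
      rw [← hmap₁, List.length_map]
    refine ⟨.bin ⟨q₁.concl.pool ++ q₂.concl.pool.map (Fml.ren (· + N₁)),
        q₁.concl.groups ++
          q₂.concl.groups.map (Finset.image (· + q₁.concl.pool.length))⟩ .mix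
        q₁ (q₂.mapP (· + N₁)), N₁ + N₂,
      (fun n => if n < N₁ then τ₁ n else τ₂ (n - N₁)),
      ⟨hqv₁, PTree.mapP_valid _ hqv₂, rfl, ?_, ?_⟩, ?_, ?_, ?_, ?_⟩
    · rw [PTree.mapP_concl]; rfl
    · rw [PTree.mapP_concl]; rfl
    · show q₁.concl.groups ++
          List.map (Finset.image (· + q₁.concl.pool.length)) q₂.concl.groups = C.groups
      rw [hG, ← hg₁, ← hg₂, hplen]
    · show (q₁.concl.pool ++ q₂.concl.pool.map (Fml.ren (· + N₁))).map _ = C.pool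
      rw [hP, List.map_append]
      congr 1
      · rw [← hmap₁]
        refine List.map_congr_left (fun A hA => ?_)
        exact Fml.ren_congr (hbtw₁ A hA) (fun a _ h2 => if_pos h2)
      · rw [← hmap₂, List.map_map]
        refine List.map_congr_left (fun A hA => ?_)
        show (A.ren (· + N₁)).ren _ = A.ren τ₂
        rw [Fml.ren_ren]
        refine Fml.ren_congr (hbtw₂ A hA) (fun a _ _ => ?_)
        show (if a + N₁ < N₁ then τ₁ (a + N₁) else τ₂ (a + N₁ - N₁)) = τ₂ a
        rw [if_neg (by omega)]
        congr 1
        omega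
    · intro A hA
      rcases List.mem_append.1 hA with hA | hA
      · exact (hbtw₁ A hA).mono le_rfl (by omega)
      · obtain ⟨B, hB, rfl⟩ := List.mem_map.1 hA
        exact ((hbtw₂ B hB).ren_add N₁).mono (by omega) (by omega)
    · intro a
      show (List.map (Fml.cPos a)
          (q₁.concl.pool ++ q₂.concl.pool.map (Fml.ren (· + N₁)))).sum ≤ 1 ∧
        (List.map (Fml.cNeg a)
          (q₁.concl.pool ++ q₂.concl.pool.map (Fml.ren (· + N₁)))).sum ≤ 1
      simp only [List.map_append, List.sum_append]
      rcases Nat.lt_or_ge a N₁ with hlt | hge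
      · have z : ∀ B ∈ q₂.concl.pool, Fml.Btw N₁ (N₂ + N₁) (B.ren (· + N₁)) :=
          fun B hB => by simpa using (hbtw₂ B hB).ren_add N₁
        have z1 : ((q₂.concl.pool.map (Fml.ren (· + N₁))).map (Fml.cPos a)).sum = 0 := by
          apply List.sum_eq_zero
          intro x hx
          obtain ⟨B', hB', rfl⟩ := List.mem_map.1 hx
          obtain ⟨B, hB, rfl⟩ := List.mem_map.1 hB'
          exact (z B hB).cPos_eq_zero (Or.inl hlt)
        have z2 : ((q₂.concl.pool.map (Fml.ren (· + N₁))).map (Fml.cNeg a)).sum = 0 := by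
          apply List.sum_eq_zero
          intro x hx
          obtain ⟨B', hB', rfl⟩ := List.mem_map.1 hx
          obtain ⟨B, hB, rfl⟩ := List.mem_map.1 hB'
          exact (z B hB).cNeg_eq_zero (Or.inl hlt)
        have := hcnt₁ a
        omega
      · obtain ⟨z1, z2⟩ := sum_zero_of_btw hbtw₁ hge
        have e1 : (q₂.concl.pool.map (Fml.ren (· + N₁))).map (Fml.cPos a)
            = q₂.concl.pool.map (Fml.cPos (a - N₁)) := by
          rw [List.map_map]
          refine List.map_congr_left (fun B _ => ?_)
          show (B.ren (· + N₁)).cPos a = B.cPos (a - N₁)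
          have : a = (a - N₁) + N₁ := by omega
          rw [this, Fml.cPos_ren_add]
          congr 1
          omega
        have e2 : (q₂.concl.pool.map (Fml.ren (· + N₁))).map (Fml.cNeg a)
            = q₂.concl.pool.map (Fml.cNeg (a - N₁)) := by
          rw [List.map_map]
          refine List.map_congr_left (fun B _ => ?_)
          show (B.ren (· + N₁)).cNeg a = B.cNeg (a - N₁)
          have : a = (a - N₁) + N₁ := by omega
          rw [this, Fml.cNeg_ren_add]
          congr 1
          omega
        rw [e1, e2]
        have := hcnt₂ (a - N₁)
        omega

end CirquentCalc

open CirquentCalc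

/-- Every formula provable in CL5⁻ is an atomic-level instance of a
normal binary tautology. -/
theorem cl5m_normal_binary_instance (F : Fml) (h : ProvesCL5m F) :
    ∃ B : Fml, Binary B ∧ Normal B ∧ Tautology B ∧ AtomicInstanceOf F B := by
  obtain ⟨p, hv, _, hconcl⟩ := h
  obtain ⟨q, N, τ, hqv, hg, hmap, hbtw, hcnt⟩ := gen p hv
  rw [hconcl] at hg hmap
  obtain ⟨B, hpool, hBF⟩ : ∃ B, q.concl.pool = [B] ∧ B.ren τ = F := by
    rcases hq : q.concl.pool with _ | ⟨B, _ | ⟨C2, rest⟩⟩ <;> rw [hq] at hmap <;>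
      simp [fmlCirquent] at hmap
    exact ⟨B, rfl, hmap⟩
  have hN : Normal B := by
    intro a
    have := hcnt a
    rw [hpool] at this
    simpa using this
  refine ⟨B, fun a => by have := hN a; omega, hN, ?_, ?_⟩
  · intro v
    have hs := sound q hqv v
    have hgm : ({0} : Finset ℕ) ∈ q.concl.groups := by rw [hg]; simp [fmlCirquent]
    obtain ⟨i, hi, A, hA, he⟩ := hs _ hgm
    rw [Finset.mem_singleton] at hi
    subst hi
    rw [hpool] at hA
    simp at hA
    rwa [hA]
  · exact ⟨fun n => Fml.pos (τ n), fun n => ⟨τ n, rfl⟩, by rw [Fml.subst_pos]; exact hBF⟩
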